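/- Let V be a right Banach ℍ-module, T ∈ B(V) and n ≥ 1 a natural number. Then σ_e^S(T^n) = { q^n : q ∈ σ_e^S(T) }. -/

import Mathlib

set_option maxHeartbeats 1000000
set_option synthInstance.maxHeartbeats 400000


/-!
Quaternionic setting: `ℍ` is the real quaternions.  A right Banach `ℍ`-module is
formalized as a real Banach space `V` together with a compatible `Module ℍᵐᵒᵖ V`
structure (right `ℍ`-action) satisfying `‖x • q‖ = ‖x‖ * |q|`; bounded right
`ℍ`-linear operators are the continuous `ℍᵐᵒᵖ`-linear maps `V →L[ℍᵐᵒᵖ] V`.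
-/

open MulOpposite

notation "ℍ" => Quaternion ℝ

section Defs

variable {W : Type*} [NormedAddCommGroup W] [Module ℍᵐᵒᵖ W] [Module ℝ W]
  [SMulCommClass ℍᵐᵒᵖ ℝ W] [ContinuousConstSMul ℝ W]

/-- `Q_q(T) = T² − 2 Re(q) T + |q|² I`. -/
noncomputable def Qs (T : W →L[ℍᵐᵒᵖ] W) (q : ℍ) : W →L[ℍᵐᵒᵖ] W :=
  T * T - (2 * q.re) • T + (‖q‖ ^ 2) • (1 : W →L[ℍᵐᵒᵖ] W)

/-- The S-resolvent set: `q` such that `Q_q(T)` is bijective with bounded inverse,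
i.e. invertible in the ring `B(W)`. -/
noncomputable def sResolvent (T : W →L[ℍᵐᵒᵖ] W) : Set ℍ :=
  {q | IsUnit (Qs T q)}

/-- The S-spectrum `σ_S(T) = ℍ \ ρ_S(T)`. -/
noncomputable def sSpectrum (T : W →L[ℍᵐᵒᵖ] W) : Set ℍ :=
  {q | ¬ IsUnit (Qs T q)}

/-- A compact operator: the image of the closed unit ball is relatively compact. -/
def IsCompactOp (K : W →L[ℍᵐᵒᵖ] W) : Prop :=
  IsCompact (closure (⇑K '' Metric.closedBall (0 : W) 1))

/-- `S` is a quasi-inverse of `T` if `S T = I - K₁` and `T S = I - K₂` with `K₁, K₂` compact. -/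
def IsQuasiInverse (S T : W →L[ℍᵐᵒᵖ] W) : Prop :=
  ∃ K₁ K₂ : W →L[ℍᵐᵒᵖ] W, IsCompactOp K₁ ∧ IsCompactOp K₂ ∧
    S * T = 1 - K₁ ∧ T * S = 1 - K₂

/-- The essential S-spectrum: `q` such that `Q_q(T)` admits no quasi-inverse. -/
noncomputable def essSpectrum (T : W →L[ℍᵐᵒᵖ] W) : Set ℍ :=
  {q | ¬ ∃ S : W →L[ℍᵐᵒᵖ] W, IsQuasiInverse S (Qs T q)}

/-- The Weyl S-spectrum: `⋂ σ_S(T + K)` over all compact `K`. -/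
noncomputable def weylSpectrum (T : W →L[ℍᵐᵒᵖ] W) : Set ℍ :=
  ⋂ K ∈ {K : W →L[ℍᵐᵒᵖ] W | IsCompactOp K}, sSpectrum (T + K)

/-- The 2-sphere `[q] = {h q h⁻¹ : h ∈ ℍ \ {0}}`. -/
def qSphere (q : ℍ) : Set ℍ := {p | ∃ h : ℍ, h ≠ 0 ∧ p = h * q * h⁻¹}

/-- Minimum modulus `μ(T) = inf {‖T x‖ : ‖x‖ = 1}`. -/
noncomputable def muMin (T : W →L[ℍᵐᵒᵖ] W) : ℝ :=
  sInf {c : ℝ | ∃ x : W, ‖x‖ = 1 ∧ c = ‖T x‖}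

/-- Operator norm of a bounded right `ℍ`-linear operator. -/
noncomputable def opNorm (T : W →L[ℍᵐᵒᵖ] W) : ℝ :=
  sInf {c : ℝ | 0 ≤ c ∧ ∀ x : W, ‖T x‖ ≤ c * ‖x‖}

/-- Restriction of `T` to an invariant submodule. -/
noncomputable def restrictOp (T : W →L[ℍᵐᵒᵖ] W) (M : Submodule ℍᵐᵒᵖ W)
    (h : ∀ x ∈ M, T x ∈ M) : ↥M →L[ℍᵐᵒᵖ] ↥M where
  toLinearMap := (T : W →ₗ[ℍᵐᵒᵖ] W).restrict h
  cont := Continuous.subtype_mk (T.continuous.comp continuous_subtype_val) _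

end Defs

section Sub

variable {V : Type*} [NormedAddCommGroup V] [NormedSpace ℝ V]
  [Module ℍᵐᵒᵖ V] [IsScalarTower ℝ ℍᵐᵒᵖ V] [SMulCommClass ℍᵐᵒᵖ ℝ V]

instance (M : Submodule ℍᵐᵒᵖ V) : SMulCommClass ℍᵐᵒᵖ ℝ ↥M := by
  constructor
  intro q r x
  apply Subtype.ext
  simp only [Submodule.coe_smul_of_tower, SetLike.val_smul]
  exact smul_comm q r (x : V)

instance (M : Submodule ℍᵐᵒᵖ V) : ContinuousConstSMul ℝ ↥M := by
  constructor
  intro r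
  have h : Continuous fun x : ↥M => r • (x : V) :=
    (continuous_const_smul r).comp continuous_subtype_val
  exact Continuous.subtype_mk h _

/-- `q` is a right eigenvalue of finite type of `T`: `V` is the direct sum of two closed
`T`-invariant right `ℍ`-submodules `M₁`, `M₂` with `M₁` finite-dimensional over `ℍ`,
`σ_S(T|M₁) ∩ σ_S(T|M₂) = ∅` and `σ_S(T|M₁) = [q]`. -/
noncomputable def IsFiniteTypeEigenvalue (T : V →L[ℍᵐᵒᵖ] V) (q : ℍ) : Prop :=
  ∃ (M₁ M₂ : Submodule ℍᵐᵒᵖ V) (h₁ : ∀ x ∈ M₁, T x ∈ M₁) (h₂ : ∀ x ∈ M₂, T x ∈ M₂),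
    IsClosed (M₁ : Set V) ∧ IsClosed (M₂ : Set V) ∧ IsCompl M₁ M₂ ∧
    FiniteDimensional ℍᵐᵒᵖ ↥M₁ ∧
    sSpectrum (restrictOp T M₁ h₁) ∩ sSpectrum (restrictOp T M₂ h₂) = ∅ ∧
    sSpectrum (restrictOp T M₁ h₁) = qSphere q

end Sub


section QuatLemmas
open Polynomial

noncomputable def chiR (v : ℂ) : Polynomial ℝ := X^2 - C (2 * v.re) * X + C (Complex.normSq v)

lemma chiR_map (v : ℂ) : (chiR v).map (algebraMap ℝ ℂ) =
    (X - C v) * (X - C ((starRingEnd ℂ) v)) := by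
  have h1 : (algebraMap ℝ ℂ) (2 * v.re) = v + (starRingEnd ℂ) v := by
    rw [Complex.coe_algebraMap, Complex.add_conj]
  have h2 : (algebraMap ℝ ℂ) (Complex.normSq v) = v * (starRingEnd ℂ) v := by
    rw [Complex.coe_algebraMap, Complex.mul_conj]
  have expand : (X - C v) * (X - C ((starRingEnd ℂ) v)) =
      X^2 - C (v + (starRingEnd ℂ) v) * X + C (v * (starRingEnd ℂ) v) := by
    rw [C_add, C_mul]; ring
  rw [expand, ← h1, ← h2]
  simp only [chiR, Polynomial.map_add, Polynomial.map_sub, Polynomial.map_mul,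
    Polynomial.map_pow, map_X, map_C]

lemma key_poly (n : ℕ) (hn : 0 < n) (z : ℂ) :
    (X^(2*n) - C (2 * (z^n).re) * X^n + C (Complex.normSq z ^ n) : Polynomial ℝ) =
      ∏ i ∈ Finset.range n, chiR ((Complex.exp (2*Real.pi*Complex.I/n)) ^ i * z) := by
  set ζ := Complex.exp (2*Real.pi*Complex.I/n) with hζdef
  have hζ : IsPrimitiveRoot ζ n := Complex.isPrimitiveRoot_exp n hn.ne'
  apply Polynomial.map_injective (algebraMap ℝ ℂ) (algebraMap ℝ ℂ).injective
  rw [Polynomial.map_prod]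
  have hconj : IsPrimitiveRoot ((starRingEnd ℂ) ζ) n :=
    hζ.map_of_injective (starRingEnd ℂ).injective
  have e1 : (X ^ n - C (z^n) : ℂ[X]) = ∏ i ∈ Finset.range n, (X - C (ζ ^ i * z)) :=
    X_pow_sub_C_eq_prod hζ hn rfl
  have e2 : (X ^ n - C (((starRingEnd ℂ) z)^n) : ℂ[X]) =
      ∏ i ∈ Finset.range n, (X - C (((starRingEnd ℂ) ζ) ^ i * (starRingEnd ℂ) z)) :=
    X_pow_sub_C_eq_prod hconj hn rfl
  have regroup : ∏ i ∈ Finset.range n, (chiR (ζ ^ i * z)).map (algebraMap ℝ ℂ) =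
      (∏ i ∈ Finset.range n, (X - C (ζ ^ i * z))) *
        ∏ i ∈ Finset.range n, (X - C (((starRingEnd ℂ) ζ) ^ i * (starRingEnd ℂ) z)) := by
    rw [← Finset.prod_mul_distrib]
    refine Finset.prod_congr rfl fun i _ => ?_
    rw [chiR_map]
    simp [map_mul, map_pow]
  rw [regroup, ← e1, ← e2]
  have hre : (algebraMap ℝ ℂ) (2 * (z^n).re) = z^n + ((starRingEnd ℂ) z) ^ n := by
    rw [Complex.coe_algebraMap, ← map_pow, Complex.add_conj]
  have hns : (algebraMap ℝ ℂ) (Complex.normSq z ^ n) = z^n * ((starRingEnd ℂ) z)^n := by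
    rw [Complex.coe_algebraMap, Complex.ofReal_pow, ← Complex.mul_conj, mul_pow]
  simp only [Polynomial.map_add, Polynomial.map_sub, Polynomial.map_mul,
    Polynomial.map_pow, map_X, map_C]
  rw [hre, hns, C_add, C_mul]
  ring

/-- The standard embedding ℂ → ℍ as a function. -/
def ofC (v : ℂ) : ℍ := ⟨v.re, v.im, 0, 0⟩

lemma ofC_re (v : ℂ) : (ofC v).re = v.re := rfl

lemma ofC_mul (v w : ℂ) : ofC (v * w) = ofC v * ofC w := by
  ext <;> simp [Quaternion.re_mul, Quaternion.imI_mul, Quaternion.imJ_mul,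
    Quaternion.imK_mul] <;> simp [ofC, Complex.mul_re, Complex.mul_im] <;> ring

lemma ofC_one : ofC 1 = 1 := by
  ext <;> simp [ofC, Quaternion.re_one, Quaternion.imI_one, Quaternion.imJ_one, Quaternion.imK_one]

lemma ofC_pow (v : ℂ) (n : ℕ) : ofC (v ^ n) = (ofC v) ^ n := by
  induction n with
  | zero => simpa using ofC_one
  | succ k ih => rw [pow_succ, pow_succ, ← ih, ← ofC_mul]

lemma ofC_normSq (v : ℂ) : Quaternion.normSq (ofC v) = Complex.normSq v := by
  rw [Quaternion.normSq_def']; simp [ofC, Complex.normSq_apply]; ring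

lemma norm_sq_eq_normSq (q : ℍ) : ‖q‖ ^ 2 = Quaternion.normSq q := by
  rw [Quaternion.normSq_eq_norm_mul_self, sq]

lemma quat_re_mul_comm (a b : ℍ) : (a * b).re = (b * a).re := by
  simp [Quaternion.re_mul]; ring

lemma quat_sq_of_im (P : ℍ) (h : P.re = 0) : P * P = -((Quaternion.normSq P : ℝ) : ℍ) := by
  have hs : star P = -P := Quaternion.star_eq_neg.2 h
  have h2 := Quaternion.star_mul_self P
  rw [hs, neg_mul] at h2
  rw [← h2, neg_neg]

lemma exists_anticomm (R : ℍ) (hR : R.re = 0) : ∃ h : ℍ, h ≠ 0 ∧ -(R * h) = h * R := by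
  by_cases hab : R.imI = 0 ∧ R.imJ = 0
  · refine ⟨⟨0,0,1,0⟩, ?_, ?_⟩
    · intro h0
      have := congrArg QuaternionAlgebra.imJ h0
      simp [Quaternion.imJ_zero] at this
    · obtain ⟨j, hj⟩ : ∃ j : ℍ, j = ⟨0,0,1,0⟩ := ⟨_, rfl⟩
      rw [← hj]
      ext <;> simp only [Quaternion.re_neg, Quaternion.imI_neg, Quaternion.imJ_neg, Quaternion.imK_neg,
        Quaternion.re_mul, Quaternion.imI_mul, Quaternion.imJ_mul,
        Quaternion.imK_mul] <;> simp [hR, hab.1, hab.2, hj] <;> ring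
  · refine ⟨⟨0, R.imJ, -R.imI, 0⟩, ?_, ?_⟩
    · intro h0
      apply hab
      constructor
      · have := congrArg QuaternionAlgebra.imJ h0; simp [Quaternion.imJ_zero] at this; linarith
      · have := congrArg QuaternionAlgebra.imI h0; simp [Quaternion.imI_zero] at this; exact this
    · obtain ⟨j, hj⟩ : ∃ j : ℍ, j = ⟨0, R.imJ, -R.imI, 0⟩ := ⟨_, rfl⟩
      rw [← hj]
      ext <;> simp only [Quaternion.re_neg, Quaternion.imI_neg, Quaternion.imJ_neg, Quaternion.imK_neg,
        Quaternion.re_mul, Quaternion.imI_mul, Quaternion.imJ_mul,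
        Quaternion.imK_mul] <;> simp [hR, hj] <;> ring

lemma normSq_im (q : ℍ) : Quaternion.normSq q.im = Quaternion.normSq q - q.re ^ 2 := by
  simp [Quaternion.normSq_def']; ring

lemma exists_conj (p r : ℍ) (h1 : p.re = r.re) (h2 : ‖p‖ = ‖r‖) :
    ∃ h : ℍ, h ≠ 0 ∧ p = h * r * h⁻¹ := by
  have hns : Quaternion.normSq p = Quaternion.normSq r := by
    rw [← norm_sq_eq_normSq, ← norm_sq_eq_normSq, h2]
  have hnim : Quaternion.normSq p.im = Quaternion.normSq r.im := by
    rw [normSq_im, normSq_im, h1, hns]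
  -- reduce to finding h ≠ 0 with p * h = h * r
  suffices hs : ∃ h : ℍ, h ≠ 0 ∧ p * h = h * r by
    obtain ⟨h, hh, he⟩ := hs
    refine ⟨h, hh, ?_⟩
    rw [← he, mul_assoc, mul_inv_cancel₀ hh, mul_one]
  -- reduce further to imaginary parts: p.im * h = h * r.im
  have hred : ∀ h : ℍ, p.im * h = h * r.im → p * h = h * r := by
    intro h he
    have hp : p = (p.re : ℍ) + p.im := (Quaternion.re_add_im p).symm
    have hr : r = (r.re : ℍ) + r.im := (Quaternion.re_add_im r).symm
    rw [hp, hr, add_mul, mul_add, he, h1, Quaternion.coe_mul_eq_smul,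
      Quaternion.mul_coe_eq_smul]
  by_cases hR0 : r.im = 0
  · -- then p.im = 0 too and p = r
    have hP0 : p.im = 0 := by
      have : Quaternion.normSq p.im = 0 := by rw [hnim, hR0, map_zero]
      exact Quaternion.normSq_eq_zero.1 this
    exact ⟨1, one_ne_zero, hred 1 (by rw [hP0, hR0, zero_mul, mul_zero])⟩
  by_cases hPR : p.im = -r.im
  · -- antipodal case
    obtain ⟨h, hh, he⟩ := exists_anticomm r.im (Quaternion.re_im r)
    exact ⟨h, hh, hred h (by rw [hPR, neg_mul, he])⟩
  · -- generic case
    set P := p.im with hPdef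
    set R := r.im with hRdef
    set h := ((Quaternion.normSq R : ℝ) : ℍ) - P * R with hdef
    have hc : ∀ a : ℍ, a * ((Quaternion.normSq R : ℝ) : ℍ) = ((Quaternion.normSq R : ℝ) : ℍ) * a :=
      fun a => (Quaternion.coe_commutes _ a).symm
    have hP2 : P * P = -((Quaternion.normSq P : ℝ) : ℍ) :=
      quat_sq_of_im P (Quaternion.re_im p)
    have hR2 : R * R = -((Quaternion.normSq R : ℝ) : ℍ) :=
      quat_sq_of_im R (Quaternion.re_im r)
    have hcomm : P * h = h * R := by
      calc P * h = P * ((Quaternion.normSq R : ℝ) : ℍ) - (P * P) * R := by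
            rw [hdef, mul_sub, mul_assoc]
        _ = ((Quaternion.normSq R : ℝ) : ℍ) * P + ((Quaternion.normSq R : ℝ) : ℍ) * R := by
            rw [hP2, hnim, hc P]; noncomm_ring
        _ = h * R := by
            rw [hdef, sub_mul, mul_assoc, hR2, mul_neg, hc P]; noncomm_ring
    have hne : h ≠ 0 := by
      intro h0
      rw [hdef, sub_eq_zero] at h0
      have e3 : P * (R * R) = ((Quaternion.normSq R : ℝ) : ℍ) * R := by
        rw [← mul_assoc, ← h0]
      rw [hR2, mul_neg, hc P] at e3
      have e4 : ((Quaternion.normSq R : ℝ) : ℍ) * (P + R) = 0 := by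
        rw [mul_add, ← e3, add_neg_cancel]
      have hnsR : ((Quaternion.normSq R : ℝ) : ℍ) ≠ 0 := by
        have hx : Quaternion.normSq R ≠ 0 := fun hh => hR0 (Quaternion.normSq_eq_zero.1 hh)
        intro hy
        exact hx (Quaternion.coe_injective (by rw [hy, Quaternion.coe_zero]))
      have e5 : P + R = 0 := by
        rcases mul_eq_zero.1 e4 with hcase | hcase
        · exact absurd hcase hnsR
        · exact hcase
      exact hPR (eq_neg_of_add_eq_zero_left e5)
    exact ⟨h, hne, hred h hcomm⟩

lemma conj_re (h r : ℍ) (hh : h ≠ 0) : (h * r * h⁻¹).re = r.re := by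
  rw [quat_re_mul_comm, ← mul_assoc, inv_mul_cancel₀ hh, one_mul]

lemma conj_norm (h r : ℍ) (hh : h ≠ 0) : ‖h * r * h⁻¹‖ = ‖r‖ := by
  rw [norm_mul, norm_mul, norm_inv]
  have : ‖h‖ ≠ 0 := norm_ne_zero_iff.2 hh
  field_simp

lemma quat_conj_pow (h q : ℍ) (hh : h ≠ 0) (n : ℕ) : (h * q * h⁻¹) ^ n = h * q ^ n * h⁻¹ := by
  induction n with
  | zero => simp [mul_inv_cancel₀ hh]
  | succ k ih =>
      rw [pow_succ, pow_succ, ih, mul_assoc (h * q ^ k) h⁻¹, ← mul_assoc h⁻¹,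
        ← mul_assoc h⁻¹, inv_mul_cancel₀ hh, one_mul]
      noncomm_ring

lemma normSq_z (p : ℍ) : Complex.normSq ⟨p.re, ‖p.im‖⟩ = ‖p‖ ^ 2 := by
  rw [norm_sq_eq_normSq]
  have h := normSq_im p
  rw [← norm_sq_eq_normSq p.im] at h
  simp only [Complex.normSq_apply]
  simp only [pow_two] at h ⊢
  nlinarith [h]

lemma norm_eq_of_sq_eq {a b : ℝ} (ha : 0 ≤ a) (hb : 0 ≤ b) (h : a ^ 2 = b ^ 2) : a = b := by
  nlinarith

end QuatLemmas

section OpLemmas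
open Polynomial Pointwise

variable {V : Type*} [NormedAddCommGroup V] [NormedSpace ℝ V]
  [Module ℍᵐᵒᵖ V] [IsScalarTower ℝ ℍᵐᵒᵖ V] [SMulCommClass ℍᵐᵒᵖ ℝ V]

lemma clm_real_smul (T : V →L[ℍᵐᵒᵖ] V) (r : ℝ) (x : V) : T (r • x) = r • T x := by
  have h1 : r • x = (r • (1 : ℍᵐᵒᵖ)) • x := by rw [smul_assoc, one_smul]
  have h2 : r • T x = (r • (1 : ℍᵐᵒᵖ)) • T x := by rw [smul_assoc, one_smul]
  rw [h1, h2, map_smul]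

noncomputable instance algB : Algebra ℝ (V →L[ℍᵐᵒᵖ] V) :=
  Algebra.ofModule
    (fun r S T => by
      ext x
      simp only [ContinuousLinearMap.smul_apply, ContinuousLinearMap.mul_apply])
    (fun r S T => by
      ext x
      simp only [ContinuousLinearMap.smul_apply, ContinuousLinearMap.mul_apply]
      exact clm_real_smul S r (T x))

lemma isCompactOp_zero : IsCompactOp (0 : V →L[ℍᵐᵒᵖ] V) := by
  have h : (⇑(0 : V →L[ℍᵐᵒᵖ] V) '' Metric.closedBall (0 : V) 1) = {0} := by
    ext y
    simp only [Set.mem_image, Set.mem_singleton_iff, ContinuousLinearMap.zero_apply]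
    constructor
    · rintro ⟨x, _, rfl⟩; rfl
    · rintro rfl; exact ⟨0, Metric.mem_closedBall_self zero_le_one, rfl⟩
  rw [IsCompactOp, h, closure_singleton]
  exact isCompact_singleton

lemma IsCompactOp.comp_left {K : V →L[ℍᵐᵒᵖ] V} (hK : IsCompactOp K) (A : V →L[ℍᵐᵒᵖ] V) :
    IsCompactOp (A * K) := by
  have h1 : IsCompact (⇑A '' closure (⇑K '' Metric.closedBall (0 : V) 1)) :=
    hK.image A.continuous
  refine h1.of_isClosed_subset isClosed_closure (closure_minimal ?_ h1.isClosed)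
  intro y hy
  obtain ⟨x, hx, rfl⟩ := hy
  exact ⟨K x, subset_closure ⟨x, hx, rfl⟩, rfl⟩

lemma IsCompactOp.comp_right {K : V →L[ℍᵐᵒᵖ] V} (hK : IsCompactOp K) (A : V →L[ℍᵐᵒᵖ] V) :
    IsCompactOp (K * A) := by
  obtain ⟨d, hd0, hd⟩ : ∃ d : ℝ, 0 < d ∧ ∀ x : V, ‖x‖ < d → ‖A x‖ < 1 := by
    have hc := A.continuous.continuousAt (x := 0)
    rw [Metric.continuousAt_iff] at hc
    obtain ⟨d, hd0, hd⟩ := hc 1 one_pos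
    refine ⟨d, hd0, fun x hx => ?_⟩
    have := hd (x := x) (by simpa [dist_eq_norm] using hx)
    simpa [dist_eq_norm] using this
  set r := (d / 2)⁻¹ with hr
  have hd2 : 0 < d / 2 := by linarith
  have hr0 : 0 < r := inv_pos.2 hd2
  have h1 : IsCompact ((fun y : V => r • y) '' closure (⇑K '' Metric.closedBall (0 : V) 1)) :=
    hK.image (continuous_const_smul r)
  refine h1.of_isClosed_subset isClosed_closure (closure_minimal ?_ h1.isClosed)
  intro y hy
  obtain ⟨x, hx, rfl⟩ := hy
  rw [Metric.mem_closedBall, dist_zero_right] at hx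
  have key : ‖A ((d / 2) • x)‖ ≤ 1 := by
    refine le_of_lt (hd _ ?_)
    rw [norm_smul, Real.norm_eq_abs, abs_of_pos hd2]
    calc d / 2 * ‖x‖ ≤ d / 2 * 1 := mul_le_mul_of_nonneg_left hx (le_of_lt hd2)
      _ < d := by linarith
  refine ⟨K (A ((d / 2) • x)), subset_closure ⟨A ((d / 2) • x), by
    simpa [Metric.mem_closedBall, dist_zero_right] using key, rfl⟩, ?_⟩
  show r • K (A ((d / 2) • x)) = (K * A) x
  rw [clm_real_smul A, ← clm_real_smul K, smul_smul, hr, inv_mul_cancel₀ hd2.ne', one_smul]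
  rfl

lemma IsCompactOp.add {K₁ K₂ : V →L[ℍᵐᵒᵖ] V} (h₁ : IsCompactOp K₁) (h₂ : IsCompactOp K₂) :
    IsCompactOp (K₁ + K₂) := by
  have hc : IsCompact (closure (⇑K₁ '' Metric.closedBall (0 : V) 1) +
      closure (⇑K₂ '' Metric.closedBall (0 : V) 1)) := IsCompact.add h₁ h₂
  refine hc.of_isClosed_subset isClosed_closure (closure_minimal ?_ hc.isClosed)
  intro y hy
  obtain ⟨x, hx, rfl⟩ := hy
  exact Set.add_mem_add (subset_closure ⟨x, hx, rfl⟩) (subset_closure ⟨x, hx, rfl⟩)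

lemma IsCompactOp.neg {K : V →L[ℍᵐᵒᵖ] V} (hK : IsCompactOp K) : IsCompactOp (-K) := by
  have h := hK.comp_left (-1 : V →L[ℍᵐᵒᵖ] V)
  have e : (-1 : V →L[ℍᵐᵒᵖ] V) * K = -K := neg_one_mul K
  rwa [e] at h

lemma IsCompactOp.sub {K₁ K₂ : V →L[ℍᵐᵒᵖ] V} (h₁ : IsCompactOp K₁) (h₂ : IsCompactOp K₂) :
    IsCompactOp (K₁ - K₂) := by
  have := h₁.add h₂.neg
  rwa [← sub_eq_add_neg] at this

/-- Abbreviation: `x` admits a quasi-inverse. -/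
def QI (x : V →L[ℍᵐᵒᵖ] V) : Prop := ∃ S, IsQuasiInverse S x

lemma qi_one : QI (1 : V →L[ℍᵐᵒᵖ] V) :=
  ⟨1, 0, 0, isCompactOp_zero, isCompactOp_zero, by simp, by simp⟩

lemma qi_mul {x y : V →L[ℍᵐᵒᵖ] V} (hx : QI x) (hy : QI y) : QI (x * y) := by
  obtain ⟨Sx, K1, K2, hK1, hK2, h1, h2⟩ := hx
  obtain ⟨Sy, K3, K4, hK3, hK4, h3, h4⟩ := hy
  refine ⟨Sy * Sx, K3 + Sy * K1 * y, K2 + x * K4 * Sx,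
    hK3.add ((hK1.comp_left Sy).comp_right y), hK2.add ((hK4.comp_left x).comp_right Sx),
    ?_, ?_⟩
  · calc Sy * Sx * (x * y) = Sy * (Sx * x * y) := by rw [mul_assoc, ← mul_assoc Sx x y]
      _ = Sy * y - Sy * (K1 * y) := by rw [h1, sub_mul, one_mul, mul_sub]
      _ = 1 - (K3 + Sy * K1 * y) := by rw [h3, sub_sub, ← mul_assoc]
  · calc x * y * (Sy * Sx) = x * (y * Sy * Sx) := by rw [mul_assoc, ← mul_assoc y Sy Sx]
      _ = x * Sx - x * (K4 * Sx) := by rw [h4, sub_mul, one_mul, mul_sub]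
      _ = 1 - (K2 + x * K4 * Sx) := by rw [h2, sub_sub, ← mul_assoc]

lemma qi_of_comm_mul {x y : V →L[ℍᵐᵒᵖ] V} (hxy : x * y = y * x) (h : QI (x * y)) : QI x := by
  obtain ⟨S, K1, K2, hK1, hK2, h1, h2⟩ := h
  set b := S * y with hb
  set c := y * S with hc
  have hbx : b * x = 1 - K1 := by
    rw [hb, mul_assoc, ← hxy, h1]
  have hxc : x * c = 1 - K2 := by
    rw [hc, ← mul_assoc, ← h2]
  have hcb : c - b = K1 * c - b * K2 := by
    have e1 : b * (x * c) = b - b * K2 := by rw [hxc, mul_sub, mul_one]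
    have e2 : b * (x * c) = c - K1 * c := by rw [← mul_assoc, hbx, sub_mul, one_mul]
    have e3 : b - b * K2 = c - K1 * c := e1.symm.trans e2
    have h5 : b - c = b * K2 - K1 * c := sub_eq_sub_iff_sub_eq_sub.mp e3
    calc c - b = -(b - c) := by rw [neg_sub]
      _ = K1 * c - b * K2 := by rw [h5, neg_sub]
  have hcx : c * x = 1 - (K1 - (K1 * c - b * K2) * x) := by
    have e : c * x = b * x + (c - b) * x := by rw [add_comm, ← add_mul, sub_add_cancel]
    rw [e, hbx, hcb]
    abel
  refine ⟨c, K1 - (K1 * c - b * K2) * x, K2, ?_, hK2, hcx, hxc⟩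
  exact hK1.sub (((hK1.comp_right c).sub (hK2.comp_left b)).comp_right x)


lemma Qs_eq_aeval (T : V →L[ℍᵐᵒᵖ] V) (q : ℍ) :
    Qs T q = aeval T (X^2 - C (2 * q.re) * X + C (‖q‖^2)) := by
  rw [map_add, map_sub, map_mul, map_pow, aeval_X, aeval_C, aeval_C,
    Algebra.algebraMap_eq_smul_one, Algebra.algebraMap_eq_smul_one,
    smul_mul_assoc, one_mul, pow_two, Qs]

lemma Qs_congr (T : V →L[ℍᵐᵒᵖ] V) {q q' : ℍ} (h1 : q.re = q'.re) (h2 : ‖q‖ = ‖q'‖) :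
    Qs T q = Qs T q' := by
  rw [Qs, Qs, h1, h2]

lemma aeval_chiR (T : V →L[ℍᵐᵒᵖ] V) {q : ℍ} {v : ℂ} (h1 : q.re = v.re)
    (h2 : ‖q‖^2 = Complex.normSq v) : Qs T q = aeval T (chiR v) := by
  rw [Qs_eq_aeval, chiR, h1, h2]

lemma core_prod (T : V →L[ℍᵐᵒᵖ] V) {n : ℕ} (hn : 0 < n) (z : ℂ) {p : ℍ}
    (h1 : p.re = (z^n).re) (h2 : ‖p‖^2 = Complex.normSq z ^ n) :
    Qs (T^n) p = aeval T (∏ i ∈ Finset.range n,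
      chiR ((Complex.exp (2*Real.pi*Complex.I/n)) ^ i * z)) := by
  rw [← key_poly n hn z, ← h1, ← h2]
  have epow : T^(2*n) = T^n * T^n := by rw [two_mul, pow_add]
  rw [map_add, map_sub, map_mul, map_pow, map_pow, aeval_X, aeval_C, aeval_C,
    Algebra.algebraMap_eq_smul_one, Algebra.algebraMap_eq_smul_one,
    smul_mul_assoc, one_mul, epow, Qs]

lemma qi_aeval_prod (T : V →L[ℍᵐᵒᵖ] V) {ι : Type*} (s : Finset ι) (f : ι → Polynomial ℝ)
    (h : ∀ i ∈ s, QI (aeval T (f i))) : QI (aeval T (∏ i ∈ s, f i)) := by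
  classical
  induction s using Finset.induction_on with
  | empty => simpa using qi_one
  | insert a t hx ih =>
      rw [Finset.prod_insert hx, map_mul]
      exact qi_mul (h a (Finset.mem_insert_self a t))
        (ih fun i hi => h i (Finset.mem_insert_of_mem hi))

end OpLemmas

theorem stmt14 {V : Type*} [NormedAddCommGroup V] [NormedSpace ℝ V] [CompleteSpace V]
    [Module ℍᵐᵒᵖ V] [IsScalarTower ℝ ℍᵐᵒᵖ V] [SMulCommClass ℍᵐᵒᵖ ℝ V]
    (hnorm : ∀ (x : V) (q : ℍ), ‖op q • x‖ = ‖x‖ * ‖q‖)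
    (T : V →L[ℍᵐᵒᵖ] V) (n : ℕ) (hn : 1 ≤ n) :
    essSpectrum (T ^ n) = (fun q : ℍ => q ^ n) '' essSpectrum T := by
  classical
  have hn0 : 0 < n := hn
  have hζ1 : (Complex.exp (2*Real.pi*Complex.I/n)) ^ n = 1 :=
    (Complex.isPrimitiveRoot_exp n hn0.ne').pow_eq_one
  set ζ : ℂ := Complex.exp (2*Real.pi*Complex.I/n) with hζdef
  ext p
  simp only [essSpectrum, Set.mem_setOf_eq, Set.mem_image]
  constructor
  · intro hp
    set z₀ : ℂ := ⟨p.re, ‖p.im‖⟩ with hz₀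
    obtain ⟨w, hw⟩ := IsAlgClosed.exists_pow_nat_eq z₀ hn0
    have hinv1 : p.re = (w^n).re := by rw [hw]
    have hinv2 : ‖p‖^2 = Complex.normSq w ^ n := by rw [← map_pow, hw, normSq_z]
    have hQ := core_prod T hn0 w hinv1 hinv2 (p := p)
    have hex : ∃ i ∈ Finset.range n, ¬ QI ((Polynomial.aeval T) (chiR (ζ^i * w))) := by
      by_contra hall
      push_neg at hall
      exact hp (hQ ▸ qi_aeval_prod T _ _ hall)
    obtain ⟨i, _, hqi⟩ := hex
    set v : ℂ := ζ^i * w with hv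
    set q₀ : ℍ := ofC v with hq₀def
    have hq₀Q : Qs T q₀ = (Polynomial.aeval T) (chiR v) :=
      aeval_chiR T (by rw [ofC_re]) (by rw [norm_sq_eq_normSq, ofC_normSq])
    have hq₀mem : ¬ QI (Qs T q₀) := by rw [hq₀Q]; exact hqi
    have hvn : v ^ n = z₀ := by
      rw [hv, mul_pow, ← pow_mul, mul_comm i n, pow_mul, hζ1, one_pow, one_mul, hw]
    have hq₀n : q₀ ^ n = ofC z₀ := by rw [hq₀def, ← ofC_pow, hvn]
    have hre : p.re = (q₀^n).re := by rw [hq₀n, ofC_re]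
    have hnrm : ‖p‖ = ‖q₀^n‖ := by
      refine norm_eq_of_sq_eq (norm_nonneg _) (norm_nonneg _) ?_
      rw [hq₀n, norm_sq_eq_normSq (ofC z₀), ofC_normSq, normSq_z]
    obtain ⟨h, hh, hconj⟩ := exists_conj p (q₀^n) hre hnrm
    refine ⟨h * q₀ * h⁻¹, ?_, ?_⟩
    · show ¬ ∃ S, IsQuasiInverse S (Qs T (h * q₀ * h⁻¹))
      have he : Qs T (h * q₀ * h⁻¹) = Qs T q₀ :=
        Qs_congr T (conj_re h q₀ hh) (conj_norm h q₀ hh)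
      rw [he]
      exact hq₀mem
    · show (h * q₀ * h⁻¹) ^ n = p
      rw [quat_conj_pow h q₀ hh n, ← hconj]
  · rintro ⟨q, hq, rfl⟩
    show ¬ ∃ S, IsQuasiInverse S (Qs (T^n) (q^n))
    set z₀ : ℂ := ⟨q.re, ‖q.im‖⟩ with hz₀
    set q₀ : ℍ := ofC z₀ with hq₀def
    have hre0 : q.re = q₀.re := by rw [hq₀def, ofC_re]
    have hnrm0 : ‖q‖ = ‖q₀‖ := by
      refine norm_eq_of_sq_eq (norm_nonneg _) (norm_nonneg _) ?_
      rw [hq₀def, norm_sq_eq_normSq (ofC z₀), ofC_normSq, normSq_z]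
    obtain ⟨h, hh, hconj⟩ := exists_conj q q₀ hre0 hnrm0
    have hqn : q^n = h * ofC (z₀^n) * h⁻¹ := by
      rw [hconj, quat_conj_pow h q₀ hh n, hq₀def, ← ofC_pow]
    have hinv1 : (q^n).re = (z₀^n).re := by rw [hqn, conj_re _ _ hh, ofC_re]
    have hinv2 : ‖q^n‖^2 = Complex.normSq z₀ ^ n := by
      rw [hqn, conj_norm _ _ hh, norm_sq_eq_normSq, ofC_normSq, map_pow]
    have hQ := core_prod T hn0 z₀ hinv1 hinv2
    intro hQI
    have hsplit : (∏ i ∈ Finset.range n, chiR (ζ^i * z₀)) =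
        chiR z₀ * ∏ i ∈ (Finset.range n).erase 0, chiR (ζ^i * z₀) := by
      have h0 : chiR ((ζ:ℂ)^0 * z₀) = chiR z₀ := by norm_num
      rw [← Finset.mul_prod_erase (Finset.range n) _ (Finset.mem_range.2 hn0), h0]
    have hcomm : (Polynomial.aeval T) (chiR z₀) *
          (Polynomial.aeval T) (∏ i ∈ (Finset.range n).erase 0, chiR (ζ^i * z₀)) =
        (Polynomial.aeval T) (∏ i ∈ (Finset.range n).erase 0, chiR (ζ^i * z₀)) *
          (Polynomial.aeval T) (chiR z₀) :=
      ((Commute.all _ _).map (Polynomial.aeval T).toRingHom).eq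
    have hQI' : QI ((Polynomial.aeval T) (chiR z₀) *
        (Polynomial.aeval T) (∏ i ∈ (Finset.range n).erase 0, chiR (ζ^i * z₀))) := by
      rw [← map_mul, ← hsplit, ← hQ]
      exact hQI
    have hqz : QI (Qs T q) := by
      rw [aeval_chiR T (q := q) (v := z₀) rfl (by rw [normSq_z])]
      exact qi_of_comm_mul hcomm hQI'
    exact hq hqz
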